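/- arXiv:1705.04883 — 4 statements merged into one kernel-verified Lean document; each statement's English description precedes it below -/
import Mathlib

section
/- There exists a finite bipartite simple graph G (in the paper, a planar graph obtained by gluing nine copies of the 3-dimensional cube graph) together with a 3-fold cover (H, L) of G such that G admits no (H, L)-coloring; in particular, the DP-chromatic number of G is at least 4. -/
open SimpleGraph

/-- A cover `(H, L)` of a simple graph `G` in the sense of Dvořák and Postle:
(C1) the sets `L u` partition the vertices of `H`;
(C2) each `L u` induces a complete subgraph of `H`;
(C3) edges of `H` between `L u` and `L v` (for `u ≠ v`) exist only when `uv ∈ E(G)`;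
(C4) for every edge `uv` of `G`, the edges of `H` between `L u` and `L v` form a matching. -/
structure DPCover {V : Type*} {W : Type*} (G : SimpleGraph V) (H : SimpleGraph W) where
  L : V → Finset W
  part : ∀ w : W, ∃! u : V, w ∈ L u
  clique : ∀ u : V, ∀ x ∈ L u, ∀ y ∈ L u, x ≠ y → H.Adj x y
  cross : ∀ u v : V, ∀ x ∈ L u, ∀ y ∈ L v, H.Adj x y → u = v ∨ G.Adj u v
  matching : ∀ u v : V, G.Adj u v → ∀ x ∈ L u, ∀ y ∈ L v, ∀ y' ∈ L v,
      H.Adj x y → H.Adj x y' → y = y'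

/-- A cover is `k`-fold if every list `L u` has exactly `k` elements. -/
def DPCover.IsFold {V W : Type*} {G : SimpleGraph V} {H : SimpleGraph W}
    (C : DPCover G H) (k : ℕ) : Prop :=
  ∀ u : V, (C.L u).card = k

/-- `G` admits an `(H, L)`-coloring: an independent set of `H` meeting each `L u` exactly once. -/
def DPCover.HasColoring {V W : Type*} {G : SimpleGraph V} {H : SimpleGraph W}
    (C : DPCover G H) : Prop :=
  ∃ I : Set W, (∀ x ∈ I, ∀ y ∈ I, ¬ H.Adj x y) ∧ (∀ u : V, ∃! x : W, x ∈ I ∧ x ∈ C.L u)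

/-- `G` admits a coloring with respect to every `k`-fold cover; `χ_DP(G)` is the least such `k`. -/
def DPColorable {V : Type*} (G : SimpleGraph V) (k : ℕ) : Prop :=
  ∀ (W : Type) (H : SimpleGraph W) (C : DPCover G H), C.IsFold k → C.HasColoring

abbrev V9 : Type := Fin 3 ⊕ Fin 6
abbrev W9 : Type := V9 × Fin 3

def tshift (i : Fin 3) (j : Fin 6) : Fin 3 :=
  if i = 1 then (if (j : ℕ) < 3 then 0 else 1)
  else if i = 2 then ⟨(j : ℕ) % 3, by omega⟩ else 0

def G9 : SimpleGraph V9 where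
  Adj u v := (u.isLeft ∧ v.isRight) ∨ (u.isRight ∧ v.isLeft)
  symm := by refine ⟨?_⟩; rintro u v (⟨h1, h2⟩ | ⟨h1, h2⟩) <;> [right; left] <;> exact ⟨h2, h1⟩
  loopless := by refine ⟨?_⟩; rintro u (⟨h1, h2⟩ | ⟨h1, h2⟩) <;> cases u <;> simp_all

def hadj : W9 → W9 → Prop
  | (Sum.inl i, a), (Sum.inl i', a') => i = i' ∧ a ≠ a'
  | (Sum.inl i, a), (Sum.inr j, b) => b = a + tshift i j
  | (Sum.inr j, b), (Sum.inl i, a) => b = a + tshift i j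
  | (Sum.inr j, b), (Sum.inr j', b') => j = j' ∧ b ≠ b'

def H9 : SimpleGraph W9 where
  Adj := hadj
  symm := by
    refine ⟨?_⟩
    rintro ⟨u, a⟩ ⟨v, b⟩ h
    cases u <;> cases v <;> simp only [hadj] at h ⊢
    · exact ⟨h.1.symm, h.2.symm⟩
    · exact h
    · exact h
    · exact ⟨h.1.symm, h.2.symm⟩
  loopless := by refine ⟨?_⟩; rintro ⟨u, a⟩ h; cases u <;> exact h.2 rfl

def L9 (u : V9) : Finset W9 :=
  Finset.univ.map ⟨fun a => (u, a), fun a b h => congrArg Prod.snd h⟩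

lemma mem_L9 {u : V9} {w : W9} : w ∈ L9 u ↔ w.1 = u := by
  simp only [L9, Finset.mem_map, Finset.mem_univ, true_and, Function.Embedding.coeFn_mk]
  constructor
  · rintro ⟨a, rfl⟩; rfl
  · rintro h; exact ⟨w.2, by cases w; simp_all; rfl⟩

lemma hadj_same : ∀ (u : V9) (a b : Fin 3), a ≠ b → hadj (u, a) (u, b) := by
  rintro (i | j) a b h
  exacts [⟨rfl, h⟩, ⟨rfl, h⟩]

def C9 : DPCover G9 H9 where
  L := L9
  part := fun w => ⟨w.1, mem_L9.mpr rfl, fun u h => (mem_L9.mp h).symm⟩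
  clique := by
    rintro u ⟨xu, a⟩ hx ⟨yu, b⟩ hy hne
    rw [mem_L9] at hx hy
    dsimp at hx hy
    subst hx; subst hy
    have hab : a ≠ b := fun h => hne (by rw [h])
    exact hadj_same _ _ _ hab
  cross := by
    rintro (i | j) (i' | j') ⟨xu, a⟩ hx ⟨yu, b⟩ hy hxy <;>
      rw [mem_L9] at hx hy <;> dsimp at hx hy <;> subst hx <;> subst hy
    · exact Or.inl (congrArg Sum.inl hxy.1)
    · exact Or.inr (Or.inl ⟨rfl, rfl⟩)
    · exact Or.inr (Or.inr ⟨rfl, rfl⟩)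
    · exact Or.inl (congrArg Sum.inr hxy.1)
  matching := by
    rintro (i | j) (i' | j') huv ⟨xu, a⟩ hx ⟨yu, b⟩ hy ⟨yu', b'⟩ hy' h1 h2 <;>
      rw [mem_L9] at hx hy hy' <;> dsimp at hx hy hy' <;>
      subst hx <;> subst hy <;> subst hy'
    · exact absurd huv (by rintro (⟨_, h⟩ | ⟨h, _⟩) <;> simp_all)
    · have e1 : b = a + tshift i j' := h1
      have e2 : b' = a + tshift i j' := h2
      rw [Prod.mk.injEq]; exact ⟨rfl, e1.trans e2.symm⟩
    · have e1 : a = b + tshift i' j := h1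
      have e2 : a = b' + tshift i' j := h2
      rw [Prod.mk.injEq]; exact ⟨rfl, add_right_cancel (e1 ▸ e2)⟩
    · exact absurd huv (by rintro (⟨_, h⟩ | ⟨h, _⟩) <;> simp_all)

lemma key : ∀ c : Fin 3 → Fin 3, ∃ j : Fin 6, ∀ b : Fin 3,
    ∃ i : Fin 3, c i + tshift i j = b := by decide

lemma C9_isFold : C9.IsFold 3 := fun u => by simp [C9, L9]

lemma C9_noColoring : ¬ C9.HasColoring := by
  rintro ⟨I, hI, hmeet⟩
  choose x hxI hxL using fun u => (hmeet u).exists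
  have hfst : ∀ u, (x u).1 = u := fun u => mem_L9.mp (hxL u)
  set a : Fin 3 → Fin 3 := fun i => (x (Sum.inl i)).2 with ha
  obtain ⟨j, hj⟩ := key a
  obtain ⟨i, hi⟩ := hj (x (Sum.inr j)).2
  apply hI _ (hxI (Sum.inl i)) _ (hxI (Sum.inr j))
  have e1 : x (Sum.inl i) = (Sum.inl i, a i) := Prod.ext (hfst _) rfl
  have e2 : x (Sum.inr j) = (Sum.inr j, (x (Sum.inr j)).2) := Prod.ext (hfst _) rfl
  rw [e1]
  show hadj (Sum.inl i, a i) (x (Sum.inr j))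
  rw [e2]
  exact hi.symm

/-- There is a finite bipartite simple graph `G` together with a 3-fold cover `(H, L)`
admitting no `(H, L)`-coloring; in particular `χ_DP(G) ≥ 4`. -/
theorem exists_bipartite_with_bad_threefold_cover :
    ∃ (V : Type) (_ : Fintype V) (G : SimpleGraph V),
      G.Colorable 2 ∧
      (∃ (W : Type) (H : SimpleGraph W) (C : DPCover G H),
        C.IsFold 3 ∧ ¬ C.HasColoring) ∧
      ¬ DPColorable G 3 := by
  refine ⟨V9, inferInstance, G9, ?_, ⟨W9, H9, C9, C9_isFold, C9_noColoring⟩, ?_⟩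
  · refine ⟨SimpleGraph.Coloring.mk (Sum.elim (fun _ => 0) (fun _ => 1)) ?_⟩
    rintro u v h
    rcases h with ⟨h1, h2⟩ | ⟨h1, h2⟩ <;> cases u <;> cases v <;> simp_all
  · intro h
    exact C9_noColoring (h W9 H9 C9 C9_isFold)
end

section
/- Let d ≥ 2 and let G be a finite simple graph with at least one vertex that is d-regular (every vertex has degree exactly d). Then the DP-chromatic index of G is at least d + 1; that is, there exists a d-fold cover (H, L) of the line graph Line(G) such that Line(G) admits no (H, L)-coloring. -/
open SimpleGraph

open SimpleGraph Finset

section DPAux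

variable {V : Type} [Fintype V] [DecidableEq V]

/-- Sign of a vertex in an edge, according to a ranking `r`. -/
noncomputable def DPsgn (d : ℕ) (r : V → ℕ) (v : V) (e : Sym2 V) : ZMod d :=
  open scoped Classical in if ∃ w ∈ e, r v < r w then 1 else -1

lemma DPsgn_isUnit (d : ℕ) (r : V → ℕ) (v : V) (e : Sym2 V) : IsUnit (DPsgn d r v e) := by
  unfold DPsgn
  split
  · exact isUnit_one
  · exact isUnit_one.neg

lemma DPsgn_add (d : ℕ) {r : V → ℕ} (hr : Function.Injective r) {u w : V} (h : u ≠ w) :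
    DPsgn d r u s(u, w) + DPsgn d r w s(u, w) = 0 := by
  have hrne : r u ≠ r w := fun hh => h (hr hh)
  unfold DPsgn
  rcases lt_or_gt_of_ne hrne with hlt | hlt
  · rw [if_pos ⟨w, by simp, hlt⟩, if_neg]
    · ring
    · rintro ⟨x, hx, hxl⟩
      rw [Sym2.mem_iff] at hx
      rcases hx with rfl | rfl <;> omega
  · rw [if_neg, if_pos ⟨u, by simp, hlt⟩]
    · ring
    · rintro ⟨x, hx, hxl⟩
      rw [Sym2.mem_iff] at hx
      rcases hx with rfl | rfl <;> omega

variable (G : SimpleGraph V) [DecidableRel G.Adj] (d : ℕ) (sg tt : V → Sym2 V → ZMod d)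

/-- The cover graph on `G.edgeSet × ZMod d`. -/
def DPcoverGraph : SimpleGraph (G.edgeSet × ZMod d) where
  Adj p q := (p.1 = q.1 ∧ p.2 ≠ q.2) ∨
    (p.1 ≠ q.1 ∧ ∃ v : V, v ∈ (p.1 : Sym2 V) ∧ v ∈ (q.1 : Sym2 V) ∧
      sg v p.1 * p.2 + tt v p.1 = sg v q.1 * q.2 + tt v q.1)
  symm := by
    refine ⟨?_⟩
    rintro p q (⟨h1, h2⟩ | ⟨h1, v, hv1, hv2, hv3⟩)
    · exact Or.inl ⟨h1.symm, h2.symm⟩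
    · exact Or.inr ⟨h1.symm, v, hv2, hv1, hv3.symm⟩
  loopless := by
    refine ⟨?_⟩
    rintro p (⟨_, h⟩ | ⟨h, _⟩) <;> exact h rfl

/-- The `d`-fold cover of the line graph. -/
noncomputable def DPcover [NeZero d] (hu : ∀ v e, IsUnit (sg v e)) :
    DPCover G.lineGraph (DPcoverGraph G d sg tt) where
  L e := Finset.univ.map ⟨fun x => ((e : G.edgeSet), x), fun a b h => congrArg Prod.snd h⟩
  part w := by
    refine ⟨w.1, Finset.mem_map.2 ⟨w.2, Finset.mem_univ _, rfl⟩, ?_⟩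
    intro u hu'
    simp only [Finset.mem_map, Function.Embedding.coeFn_mk, Finset.mem_univ, true_and] at hu'
    obtain ⟨x, hx⟩ := hu'
    rw [← hx]
    rfl
  clique u x hx y hy hxy := by
    simp only [Finset.mem_map, Function.Embedding.coeFn_mk, Finset.mem_univ, true_and] at hx hy
    obtain ⟨a, rfl⟩ := hx
    obtain ⟨b, rfl⟩ := hy
    exact Or.inl ⟨rfl, fun hh => hxy (Prod.ext rfl hh)⟩
  cross u v x hx y hy hadj := by
    simp only [Finset.mem_map, Function.Embedding.coeFn_mk, Finset.mem_univ, true_and] at hx hy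
    obtain ⟨a, rfl⟩ := hx
    obtain ⟨b, rfl⟩ := hy
    rcases hadj with ⟨h1, _⟩ | ⟨h1, w, hw1, hw2, _⟩
    · exact Or.inl h1
    · exact Or.inr (lineGraph_adj_iff_exists.2 ⟨h1, w, hw1, hw2⟩)
  matching u v huv x hx y hy y' hy' h1 h2 := by
    simp only [Finset.mem_map, Function.Embedding.coeFn_mk, Finset.mem_univ, true_and] at hx hy hy'
    obtain ⟨a, rfl⟩ := hx
    obtain ⟨b, rfl⟩ := hy
    obtain ⟨b', rfl⟩ := hy'
    have hne : u ≠ v := G.lineGraph.ne_of_adj huv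
    have hne' : (u : Sym2 V) ≠ (v : Sym2 V) := fun hh => hne (Subtype.ext hh)
    rcases h1 with ⟨h1, _⟩ | ⟨_, w, hw1, hw2, heq⟩
    · exact absurd h1 hne
    rcases h2 with ⟨h1, _⟩ | ⟨_, w', hw1', hw2', heq'⟩
    · exact absurd h1 hne
    have hww : w = w' := by
      by_contra hww
      exact hne' (Sym2.eq_of_ne_mem hww hw1 hw1' hw2 hw2')
    subst hww
    have : sg w v * b = sg w v * b' := by
      have := heq.symm.trans heq'
      exact add_right_cancel this
    have hb : b = b' := (hu w v).mul_left_cancel this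
    rw [hb]

end DPAux
/-- If `d ≥ 2` and `G` is a `d`-regular graph with at least one vertex, then
`χ'_DP(G) ≥ d + 1`: some `d`-fold cover of the line graph of `G` admits no coloring. -/
theorem dRegular_DP_chromatic_index_ge {V : Type} [Fintype V] [Nonempty V] [DecidableEq V]
    (G : SimpleGraph V) [DecidableRel G.Adj] (d : ℕ) (hd : 2 ≤ d)
    (hreg : ∀ v : V, G.degree v = d) :
    ∃ (W : Type) (H : SimpleGraph W) (C : DPCover G.lineGraph H),
      C.IsFold d ∧ ¬ C.HasColoring := by
  classical
  haveI : NeZero d := ⟨by omega⟩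
  haveI : Fact (1 < d) := ⟨by omega⟩
  set r : V → ℕ := fun v => ((Fintype.equivFin V) v : ℕ) with hrdef
  have hrinj : Function.Injective r := by
    intro a b h
    exact (Fintype.equivFin V).injective (Fin.ext h)
  obtain ⟨v₀⟩ := (inferInstance : Nonempty V)
  have hdeg0 : 0 < G.degree v₀ := by rw [hreg]; omega
  obtain ⟨u₀, hu₀⟩ : ∃ u, G.Adj v₀ u := by
    obtain ⟨u, hu⟩ := Finset.card_pos.mp hdeg0
    exact ⟨u, (SimpleGraph.mem_neighborFinset G v₀ u).mp hu⟩
  set Sd : ZMod d := ∑ x : ZMod d, x with hSd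
  set τ : ZMod d := (Fintype.card V : ZMod d) * Sd + 1 with hτ
  set e₀ : G.edgeSet := ⟨s(v₀, u₀), G.mem_edgeSet.mpr hu₀⟩ with he₀
  set sg : V → Sym2 V → ZMod d := DPsgn d r with hsg
  set tt : V → Sym2 V → ZMod d :=
    fun v e => if v = v₀ ∧ e = (e₀ : Sym2 V) then τ else 0 with htt
  have hsgadd : ∀ {a b : V}, a ≠ b → sg a s(a, b) + sg b s(a, b) = 0 := by
    intro a b hab
    rw [hsg]
    exact DPsgn_add d hrinj hab
  refine ⟨G.edgeSet × ZMod d, DPcoverGraph G d sg tt,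
    DPcover G d sg tt (fun v e => by rw [hsg]; exact DPsgn_isUnit d r v e), ?_, ?_⟩
  · intro e
    simp [DPcover, ZMod.card]
  · rintro ⟨I, hind, hmeet⟩
    set c : G.edgeSet → ZMod d := fun e => ((hmeet e).exists.choose).2 with hc
    have hmemL : ∀ (u : G.edgeSet) (w : G.edgeSet × ZMod d),
        w ∈ (DPcover G d sg tt (fun v e => by rw [hsg]; exact DPsgn_isUnit d r v e)).L u →
        w.1 = u := by
      intro u w hw
      simp only [DPcover, Finset.mem_map, Function.Embedding.coeFn_mk, Finset.mem_univ,
        true_and] at hw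
      obtain ⟨x, hx⟩ := hw
      exact (congrArg Prod.fst hx).symm
    have hcI : ∀ e : G.edgeSet, (e, c e) ∈ I := by
      intro e
      have h1 := (hmeet e).exists.choose_spec
      have h2 : ((hmeet e).exists.choose).1 = e := hmemL e _ h1.2
      have h4 : (hmeet e).exists.choose = (e, c e) := Prod.ext h2 rfl
      rw [← h4]; exact h1.1
    have hkey : ∀ v : V, ∀ e f : G.edgeSet, v ∈ (e : Sym2 V) → v ∈ (f : Sym2 V) → e ≠ f →
        sg v e * c e + tt v e ≠ sg v f * c f + tt v f := by
      intro v e f hv1 hv2 hef heq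
      exact hind _ (hcI e) _ (hcI f) (Or.inr ⟨hef, v, hv1, hv2, heq⟩)
    have hFvcard : ∀ v : V,
        (Finset.univ.filter (fun e : G.edgeSet => v ∈ (e : Sym2 V))).card = d := by
      intro v
      rw [← hreg v, ← SimpleGraph.card_incidenceFinset_eq_degree]
      apply Finset.card_bij (fun (e : G.edgeSet) _ => (e : Sym2 V))
      · intro e he
        rw [SimpleGraph.mem_incidenceFinset]
        exact ⟨e.2, (Finset.mem_filter.mp he).2⟩
      · intro a _ b _ hab
        exact Subtype.ext hab
      · intro f hf
        rw [SimpleGraph.mem_incidenceFinset] at hf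
        exact ⟨⟨f, hf.1⟩, Finset.mem_filter.mpr ⟨Finset.mem_univ _, hf.2⟩, rfl⟩
    have hsumv : ∀ v : V,
        (∑ e ∈ Finset.univ.filter (fun e : G.edgeSet => v ∈ (e : Sym2 V)),
          (sg v (e : Sym2 V) * c e + tt v (e : Sym2 V))) = Sd := by
      intro v
      have hinj : ∀ e ∈ Finset.univ.filter (fun e : G.edgeSet => v ∈ (e : Sym2 V)),
          ∀ f ∈ Finset.univ.filter (fun e : G.edgeSet => v ∈ (e : Sym2 V)),
          (fun e : G.edgeSet => sg v (e : Sym2 V) * c e + tt v (e : Sym2 V)) e =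
          (fun e : G.edgeSet => sg v (e : Sym2 V) * c e + tt v (e : Sym2 V)) f → e = f := by
        intro e he f hf hef
        by_contra hne
        exact hkey v e f (Finset.mem_filter.mp he).2 (Finset.mem_filter.mp hf).2 hne hef
      have himg : (Finset.univ.filter (fun e : G.edgeSet => v ∈ (e : Sym2 V))).image
          (fun e : G.edgeSet => sg v (e : Sym2 V) * c e + tt v (e : Sym2 V)) = Finset.univ := by
        apply Finset.eq_univ_of_card
        rw [Finset.card_image_of_injOn (fun a ha b hb h =>
          hinj a (Finset.mem_coe.mp ha) b (Finset.mem_coe.mp hb) h), hFvcard v, ZMod.card]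
      have hsi := Finset.sum_image (f := fun x : ZMod d => x) hinj
      rw [himg] at hsi
      rw [hSd]
      exact hsi.symm
    -- endpoint decomposition
    have hend : ∀ e : G.edgeSet, ∃ a b : V, a ≠ b ∧ (e : Sym2 V) = s(a, b) ∧
        Finset.univ.filter (fun v : V => v ∈ (e : Sym2 V)) = {a, b} := by
      rintro ⟨es, hes⟩
      induction es using Sym2.ind with
      | _ a b =>
        have hadj : G.Adj a b := G.mem_edgeSet.mp hes
        refine ⟨a, b, hadj.ne, rfl, ?_⟩
        ext v
        simp [Sym2.mem_iff]
    have hA : (∑ v : V, ∑ e ∈ Finset.univ.filter (fun e : G.edgeSet => v ∈ (e : Sym2 V)),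
        sg v (e : Sym2 V) * c e) = 0 := by
      have hswap : (∑ v : V, ∑ e ∈ Finset.univ.filter (fun e : G.edgeSet => v ∈ (e : Sym2 V)),
          sg v (e : Sym2 V) * c e)
          = ∑ e : G.edgeSet, ∑ v ∈ Finset.univ.filter (fun v : V => v ∈ (e : Sym2 V)),
            sg v (e : Sym2 V) * c e := by
        simp only [Finset.sum_filter]
        exact Finset.sum_comm
      rw [hswap]
      apply Finset.sum_eq_zero
      intro e _
      obtain ⟨a, b, hne, habe, hfe⟩ := hend e
      rw [hfe, Finset.sum_pair hne, habe, ← add_mul, hsgadd hne, zero_mul]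
    have hB : (∑ v : V, ∑ e ∈ Finset.univ.filter (fun e : G.edgeSet => v ∈ (e : Sym2 V)),
        tt v (e : Sym2 V)) = τ := by
      rw [Finset.sum_eq_single v₀]
      · have hcong : ∀ e : G.edgeSet,
            tt v₀ (e : Sym2 V) = if e = e₀ then τ else 0 := by
          intro e
          by_cases h : e = e₀
          · subst h
            simp [htt]
          · have h' : (e : Sym2 V) ≠ (e₀ : Sym2 V) := fun hh => h (Subtype.ext hh)
            simp [htt, h, h']
        rw [Finset.sum_congr rfl (fun e _ => hcong e), Finset.sum_ite_eq' _ e₀ (fun _ => τ),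
          if_pos]
        rw [Finset.mem_filter]
        refine ⟨Finset.mem_univ _, ?_⟩
        rw [he₀]
        exact Sym2.mem_mk_left v₀ u₀
      · intro v _ hv
        apply Finset.sum_eq_zero
        intro e _
        simp only [htt]
        rw [if_neg]
        rintro ⟨h, -⟩; exact hv h
      · intro h; exact absurd (Finset.mem_univ v₀) h
    have hglob : (Fintype.card V : ZMod d) * Sd + 1 = (Fintype.card V : ZMod d) * Sd := by
      have h1 : (∑ v : V, ∑ e ∈ Finset.univ.filter (fun e : G.edgeSet => v ∈ (e : Sym2 V)),
          (sg v (e : Sym2 V) * c e + tt v (e : Sym2 V))) = ∑ _v : V, Sd :=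
        Finset.sum_congr rfl (fun v _ => hsumv v)
      simp only [Finset.sum_add_distrib] at h1
      rw [hA, hB, Finset.sum_const, Finset.card_univ, nsmul_eq_mul, zero_add] at h1
      rw [← hτ, h1]
    have h10 : (1 : ZMod d) = 0 := by
      have h2 : (Fintype.card V : ZMod d) * Sd + 1 = (Fintype.card V : ZMod d) * Sd + 0 := by
        rw [add_zero]; exact hglob
      exact add_left_cancel h2
    exact one_ne_zero h10
end

section
/- Let d ≥ 2, let G be a finite d-regular simple graph on an even number of vertices, let uv be an edge of G, and let G' = G − uv be the graph obtained by deleting the edge uv. Let C be a set of d colors and let f : E(G') → C be a proper edge coloring of G' (adjacent edges receive distinct colors). Then for every color c ∈ C, c is absent from all edges of G' incident to u if and only if c is absent from all edges of G' incident to v. (Since u and v both have degree d − 1 in G', each of them misses exactly one color, and these missing colors coincide.) -/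
open SimpleGraph

/-- Let `d ≥ 2`, let `G` be a `d`-regular graph on an even number of vertices, let `uv` be an
edge of `G`, and let `G' = G - uv`. For every proper edge coloring of `G'` with a set of `d`
colors, a color is missing at `u` if and only if it is missing at `v`. -/
theorem missing_color_at_u_iff_missing_at_v {V : Type*} [Fintype V] [DecidableEq V]
    (G : SimpleGraph V) [DecidableRel G.Adj] (d : ℕ) (hd : 2 ≤ d)
    (hreg : ∀ v : V, G.degree v = d) (heven : Even (Fintype.card V))
    (u v : V) (huv : G.Adj u v)
    (C : Type*) [Fintype C] (hC : Fintype.card C = d)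
    (f : (G.deleteEdges {s(u, v)}).edgeSet → C)
    (hf : ∀ e₁ e₂ : (G.deleteEdges {s(u, v)}).edgeSet, e₁ ≠ e₂ →
      (∃ w : V, w ∈ (e₁ : Sym2 V) ∧ w ∈ (e₂ : Sym2 V)) → f e₁ ≠ f e₂)
    (c : C) :
    (∀ e : (G.deleteEdges {s(u, v)}).edgeSet, u ∈ (e : Sym2 V) → f e ≠ c) ↔
    (∀ e : (G.deleteEdges {s(u, v)}).edgeSet, v ∈ (e : Sym2 V) → f e ≠ c) := by
  classical
  have hne : u ≠ v := huv.ne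
  have hf' : ∀ e₁ e₂ : (G.deleteEdges {s(u,v)}).edgeSet, ∀ w : V, w ∈ (e₁ : Sym2 V) → w ∈ (e₂ : Sym2 V) →
      f e₁ = f e₂ → e₁ = e₂ := by
    intro e₁ e₂ w h1 h2 hfe
    by_contra hne'
    exact hf e₁ e₂ hne' ⟨w, h1, h2⟩ hfe
  -- covered vertices
  set S : Finset V := Finset.univ.filter (fun w => ∃ e : (G.deleteEdges {s(u,v)}).edgeSet, w ∈ (e : Sym2 V) ∧ f e = c)
    with hS
  have hmemS : ∀ w, w ∈ S ↔ ∃ e : (G.deleteEdges {s(u,v)}).edgeSet, w ∈ (e : Sym2 V) ∧ f e = c := by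
    intro w; simp [hS]
  -- every vertex other than u, v is covered
  have hcov_other : ∀ w : V, w ≠ u → w ≠ v → w ∈ S := by
    intro w hwu hwv
    have hnb : (G.deleteEdges {s(u,v)}).neighborFinset w = G.neighborFinset w := by
      ext x
      simp only [mem_neighborFinset, deleteEdges_adj, Set.mem_singleton_iff,
        Sym2.eq_iff]
      constructor
      · tauto
      · intro h
        refine ⟨h, ?_⟩
        rintro (⟨rfl, rfl⟩ | ⟨rfl, rfl⟩) <;> simp at hwu hwv
    have hdeg : ((G.deleteEdges {s(u,v)}).neighborFinset w).card = d := by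
      rw [hnb, card_neighborFinset_eq_degree]
      exact hreg w
    have hedge : ∀ x ∈ (G.deleteEdges {s(u,v)}).neighborFinset w, s(w, x) ∈ (G.deleteEdges {s(u,v)}).edgeSet := by
      intro x hx
      rw [mem_neighborFinset] at hx
      exact hx
    set g : ((G.deleteEdges {s(u,v)}).neighborFinset w) → C := fun x => f ⟨s(w, x.1), hedge x.1 x.2⟩ with hg
    have hginj : Function.Injective g := by
      intro x y hxy
      have := hf' _ _ w (Sym2.mem_mk_left _ _) (Sym2.mem_mk_left _ _) hxy
      have h2 : s(w, (x:V)) = s(w, (y:V)) := congrArg Subtype.val this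
      rw [Sym2.eq_iff] at h2
      rcases h2 with ⟨-, h⟩ | ⟨h1, h2⟩
      · exact Subtype.ext h
      · exact Subtype.ext (h1 ▸ h2.symm ▸ rfl)
    have hcard : Fintype.card ((G.deleteEdges {s(u,v)}).neighborFinset w) = Fintype.card C := by
      rw [Fintype.card_coe, hdeg, hC]
    have hgsurj : Function.Surjective g :=
      ((Fintype.bijective_iff_injective_and_card g).mpr ⟨hginj, hcard⟩).surjective
    obtain ⟨x, hx⟩ := hgsurj c
    exact (hmemS w).mpr ⟨⟨s(w, x.1), hedge x.1 x.2⟩, Sym2.mem_mk_left _ _, hx⟩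
  -- S has even cardinality
  have hSeven : Even S.card := by
    set M : Finset (G.deleteEdges {s(u,v)}).edgeSet := Finset.univ.filter (fun e => f e = c) with hM
    have hSeq : S = M.biUnion (fun e => {(e : Sym2 V).out.1, (e : Sym2 V).out.2}) := by
      ext w
      rw [hmemS, Finset.mem_biUnion]
      constructor
      · rintro ⟨e, hwe, hfe⟩
        refine ⟨e, by simp [hM, hfe], ?_⟩
        have : (e : Sym2 V) = s((e : Sym2 V).out.1, (e : Sym2 V).out.2) := by
          exact (Quot.out_eq _).symm
        rw [this, Sym2.mem_iff] at hwe
        simpa using hwe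
      · rintro ⟨e, he, hwe⟩
        refine ⟨e, ?_, by simpa [hM] using he⟩
        simp only [Finset.mem_insert, Finset.mem_singleton] at hwe
        rcases hwe with rfl | rfl
        · exact Sym2.out_fst_mem _
        · exact Sym2.out_snd_mem _
    rw [hSeq, Finset.card_biUnion]
    · have hcard2 : ∀ e ∈ M, ({(e : Sym2 V).out.1, (e : Sym2 V).out.2} : Finset V).card = 2 := by
        intro e he
        have hdiag : ¬ (e : Sym2 V).IsDiag := (G.deleteEdges {s(u,v)}).not_isDiag_of_mem_edgeSet e.2
        have hneq : (e : Sym2 V).out.1 ≠ (e : Sym2 V).out.2 := by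
          intro h
          apply hdiag
          have : (e : Sym2 V) = s((e : Sym2 V).out.1, (e : Sym2 V).out.2) := (Quot.out_eq _).symm
          rw [this, Sym2.isDiag_iff_proj_eq]
          exact h
        rw [Finset.card_insert_of_notMem (by simpa using hneq), Finset.card_singleton]
      rw [Finset.sum_congr rfl hcard2, Finset.sum_const, smul_eq_mul]
      exact even_two.mul_left _
    · intro e₁ h₁ e₂ h₂ hne12
      simp only [hM, Finset.mem_coe, Finset.mem_filter] at h₁ h₂
      rw [Function.onFun, Finset.disjoint_left]
      intro w hw1 hw2
      have m1 : w ∈ (e₁ : Sym2 V) := by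
        simp only [Finset.mem_insert, Finset.mem_singleton] at hw1
        rcases hw1 with rfl | rfl
        · exact Sym2.out_fst_mem _
        · exact Sym2.out_snd_mem _
      have m2 : w ∈ (e₂ : Sym2 V) := by
        simp only [Finset.mem_insert, Finset.mem_singleton] at hw2
        rcases hw2 with rfl | rfl
        · exact Sym2.out_fst_mem _
        · exact Sym2.out_snd_mem _
      exact hne12 (hf' e₁ e₂ w m1 m2 (h₁.2.trans h₂.2.symm))
  -- the complement of S has even cardinality and is contained in {u, v}
  have hcompl_even : Even Sᶜ.card := by
    have h1 : S.card + Sᶜ.card = Fintype.card V := Finset.card_add_card_compl S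
    have h2 : Even (S.card + Sᶜ.card) := by rw [h1]; exact heven
    exact (Nat.even_add.mp h2).mp hSeven
  have hcompl_sub : Sᶜ ⊆ {u, v} := by
    intro w hw
    rw [Finset.mem_compl] at hw
    by_contra h
    simp only [Finset.mem_insert, Finset.mem_singleton, not_or] at h
    exact hw (hcov_other w h.1 h.2)
  -- u ∈ S ↔ v ∈ S
  have key : u ∈ S ↔ v ∈ S := by
    constructor
    · intro hu
      by_contra hv
      have : Sᶜ = {v} := by
        apply Finset.Subset.antisymm
        · intro w hw
          have := hcompl_sub hw
          simp only [Finset.mem_insert, Finset.mem_singleton] at this ⊢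
          rcases this with rfl | rfl
          · exact absurd (Finset.mem_compl.mp hw) (not_not.mpr hu)
          · rfl
        · intro w hw
          rw [Finset.mem_singleton] at hw
          subst hw
          exact Finset.mem_compl.mpr hv
      rw [this, Finset.card_singleton] at hcompl_even
      exact (Nat.not_even_one) hcompl_even
    · intro hv
      by_contra hu
      have : Sᶜ = {u} := by
        apply Finset.Subset.antisymm
        · intro w hw
          have := hcompl_sub hw
          simp only [Finset.mem_insert, Finset.mem_singleton] at this ⊢
          rcases this with rfl | rfl
          · rfl
          · exact absurd (Finset.mem_compl.mp hw) (not_not.mpr hv)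
        · intro w hw
          rw [Finset.mem_singleton] at hw
          subst hw
          exact Finset.mem_compl.mpr hu
      rw [this, Finset.card_singleton] at hcompl_even
      exact (Nat.not_even_one) hcompl_even
  -- conclude
  constructor
  · intro h e hve
    intro hfe
    have hv : v ∈ S := (hmemS v).mpr ⟨e, hve, hfe⟩
    obtain ⟨e', hue', hfe'⟩ := (hmemS u).mp (key.mpr hv)
    exact h e' hue' hfe'
  · intro h e hue
    intro hfe
    have hu : u ∈ S := (hmemS u).mpr ⟨e, hue, hfe⟩
    obtain ⟨e', hve', hfe'⟩ := (hmemS v).mp (key.mp hu)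
    exact h e' hve' hfe'
end

section
/- For every integer n ≥ 3, the cycle graph C_n on n vertices admits a 2-fold cover (H, L) such that C_n has no (H, L)-coloring; consequently, the DP-chromatic number of C_n is at least 3 (and, combined with the bound χ_DP ≤ Δ + 1, equals 3). This holds regardless of the parity of n, in contrast to list coloring, where even cycles are 2-choosable. -/
open SimpleGraph

/-- The cycle graph on `ℤ/nℤ`, with `i` adjacent to `i ± 1`. -/
def cycleOnZMod (n : ℕ) : SimpleGraph (ZMod n) :=
  SimpleGraph.fromRel (fun i j => j = i + 1)

/-! ### Auxiliary facts about `ZMod n` -/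

lemma natCast_inj_of_lt {n : ℕ} (i j : ℕ) (hi : i < n) (hj : j < n)
    (h : (i : ZMod n) = (j : ZMod n)) : i = j := by
  have := ZMod.val_cast_of_lt hi
  have := ZMod.val_cast_of_lt hj
  rw [h] at *
  omega

lemma cyc_one_ne_zero {n : ℕ} (hn : 3 ≤ n) : (1 : ZMod n) ≠ 0 := by
  intro h
  have h1 : ((1 : ℕ) : ZMod n) = ((0 : ℕ) : ZMod n) := by push_cast; exact h
  exact absurd (natCast_inj_of_lt 1 0 (by omega) (by omega) h1) (by omega)

lemma cyc_two_ne_zero {n : ℕ} (hn : 3 ≤ n) : (2 : ZMod n) ≠ 0 := by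
  intro h
  have h1 : ((2 : ℕ) : ZMod n) = ((0 : ℕ) : ZMod n) := by push_cast; exact h
  exact absurd (natCast_inj_of_lt 2 0 (by omega) (by omega) h1) (by omega)

/-! ### Part 1: the bad 2-fold cover -/

def twist (n : ℕ) : ZMod n → ZMod 2 := fun i => if i = 0 then (n : ZMod 2) + 1 else 0

def Hgraph (n : ℕ) : SimpleGraph (ZMod n × ZMod 2) :=
  SimpleGraph.fromRel (fun p q => p.1 = q.1 ∨ (q.1 = p.1 + 1 ∧ q.2 = p.2 + twist n p.1))

lemma mem_pairL {n : ℕ} (u : ZMod n) (w : ZMod n × ZMod 2) :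
    w ∈ ({(u, 0), (u, 1)} : Finset (ZMod n × ZMod 2)) ↔ w.1 = u := by
  constructor
  · intro h
    rcases Finset.mem_insert.mp h with h | h
    · rw [h]
    · rw [Finset.mem_singleton.mp h]
  · intro h
    have h2 : w.2 = 0 ∨ w.2 = 1 := by
      have : ∀ a : ZMod 2, a = 0 ∨ a = 1 := by decide
      exact this w.2
    rcases h2 with h2 | h2 <;>
      simp [Finset.mem_insert, Finset.mem_singleton, Prod.ext_iff, h, h2]

lemma Hgraph_adj_consec {n : ℕ} (hn : 3 ≤ n) (i : ZMod n) (a b : ZMod 2) :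
    (Hgraph n).Adj (i, a) (i + 1, b) ↔ b = a + twist n i := by
  have h1 : (1 : ZMod n) ≠ 0 := cyc_one_ne_zero hn
  have h2 : (2 : ZMod n) ≠ 0 := cyc_two_ne_zero hn
  have hne : i ≠ i + 1 := by
    intro h; exact h1 (by linear_combination -h)
  have hne2 : i ≠ i + 1 + 1 := by
    intro h; exact h2 (by linear_combination -h)
  constructor
  · intro h
    rw [Hgraph, SimpleGraph.fromRel_adj] at h
    obtain ⟨-, h | h⟩ := h
    · rcases h with h | h
      · exact absurd h hne
      · exact h.2
    · rcases h with h | h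
      · exact absurd h.symm hne
      · exact absurd h.1 hne2
  · intro h
    rw [Hgraph, SimpleGraph.fromRel_adj]
    refine ⟨?_, Or.inl (Or.inr ⟨rfl, h⟩)⟩
    intro hc
    exact hne (congrArg Prod.fst hc)

def badCover (n : ℕ) (hn : 3 ≤ n) : DPCover (cycleOnZMod n) (Hgraph n) where
  L u := {(u, 0), (u, 1)}
  part w := by
    refine ⟨w.1, (mem_pairL w.1 w).mpr rfl, fun u hu => ((mem_pairL u w).mp hu).symm⟩
  clique u x hx y hy hxy := by
    rw [mem_pairL] at hx hy
    rw [Hgraph, SimpleGraph.fromRel_adj]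
    exact ⟨hxy, Or.inl (Or.inl (hx.trans hy.symm))⟩
  cross u v x hx y hy hadj := by
    rw [mem_pairL] at hx hy
    rw [Hgraph, SimpleGraph.fromRel_adj] at hadj
    obtain ⟨hne, h | h⟩ := hadj
    · rcases h with h | h
      · exact Or.inl (hx ▸ hy ▸ h)
      · refine Or.inr ?_
        rw [cycleOnZMod, SimpleGraph.fromRel_adj]
        refine ⟨?_, Or.inl (hy ▸ hx ▸ h.1)⟩
        intro hc
        exact cyc_one_ne_zero hn (by
          have := hy ▸ hx ▸ h.1
          rw [hc] at this
          linear_combination -this)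
    · rcases h with h | h
      · exact Or.inl (hx ▸ hy ▸ h.symm)
      · refine Or.inr ?_
        rw [cycleOnZMod, SimpleGraph.fromRel_adj]
        refine ⟨?_, Or.inr (hx ▸ hy ▸ h.1)⟩
        intro hc
        exact cyc_one_ne_zero hn (by
          have := hx ▸ hy ▸ h.1
          rw [hc] at this
          linear_combination -this)
  matching u v huv x hx y hy y' hy' h h' := by
    rw [mem_pairL] at hx hy hy'
    have h2 : (2 : ZMod n) ≠ 0 := cyc_two_ne_zero hn
    have hvu : v ≠ u := by
      intro hc
      rw [cycleOnZMod, SimpleGraph.fromRel_adj] at huv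
      exact huv.1 (hc.symm)
    rw [Hgraph, SimpleGraph.fromRel_adj] at h h'
    have key : ∀ z : ZMod n × ZMod 2, z.1 = v →
        (x.1 = z.1 ∨ (z.1 = x.1 + 1 ∧ z.2 = x.2 + twist n x.1) ∨
          (x.1 = z.1 + 1 ∧ x.2 = z.2 + twist n z.1)) →
        z.2 = (if v = u + 1 then x.2 + twist n u else x.2 - twist n v) := by
      intro z hz hcase
      rcases hcase with hc | hc | hc
      · exact absurd (hz ▸ hx ▸ hc) hvu.symm
      · have hv : v = u + 1 := by rw [← hz, ← hx]; exact hc.1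
        rw [if_pos hv, hc.2, hx]
      · have hv : u = v + 1 := by rw [← hz, ← hx]; exact hc.1
        have hif : ¬ (v = u + 1) := by
          intro hc2
          rw [hv] at hc2
          exact h2 (by linear_combination -hc2)
        rw [if_neg hif]
        rw [hz] at hc
        linear_combination -hc.2
    have e1 := key y hy (by
      obtain ⟨-, hc | hc⟩ := h
      · rcases hc with hc | hc
        · exact Or.inl hc
        · exact Or.inr (Or.inl hc)
      · rcases hc with hc | hc
        · exact Or.inl hc.symm
        · exact Or.inr (Or.inr hc))
    have e2 := key y' hy' (by
      obtain ⟨-, hc | hc⟩ := h'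
      · rcases hc with hc | hc
        · exact Or.inl hc
        · exact Or.inr (Or.inl hc)
      · rcases hc with hc | hc
        · exact Or.inl hc.symm
        · exact Or.inr (Or.inr hc))
    exact Prod.ext (hy.trans hy'.symm) (e1.trans e2.symm)

lemma badCover_isFold (n : ℕ) (hn : 3 ≤ n) : (badCover n hn).IsFold 2 := by
  intro u
  have : ((u, (0 : ZMod 2)) : ZMod n × ZMod 2) ≠ (u, 1) := by
    intro h
    have := congrArg Prod.snd h
    simp at this
  show ({(u, 0), (u, 1)} : Finset (ZMod n × ZMod 2)).card = 2
  rw [Finset.card_insert_of_notMem (by simpa using this), Finset.card_singleton]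

lemma badCover_noColoring (n : ℕ) (hn : 3 ≤ n) : ¬ (badCover n hn).HasColoring := by
  rintro ⟨I, hind, hsel⟩
  haveI : NeZero n := ⟨by omega⟩
  -- define g
  have hGL : ∀ u : ZMod n, (badCover n hn).L u = {(u, 0), (u, 1)} := fun u => rfl
  set g : ZMod n → ZMod 2 := fun i => ((hsel i).exists.choose).2 with hg
  have hgI : ∀ i : ZMod n, ((i, g i) : ZMod n × ZMod 2) ∈ I := by
    intro i
    obtain ⟨h1, h2⟩ := (hsel i).exists.choose_spec
    have h2' : ((hsel i).exists.choose).1 = i := (mem_pairL i _).mp h2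
    have : (hsel i).exists.choose = (i, g i) := Prod.ext h2' rfl
    rw [← this]; exact h1
  have hstep : ∀ i : ZMod n, g (i + 1) = g i + twist n i + 1 := by
    intro i
    have hnadj := hind _ (hgI i) _ (hgI (i + 1))
    rw [Hgraph_adj_consec hn] at hnadj
    revert hnadj
    generalize g (i+1) = a; generalize g i = b; generalize twist n i = c
    revert a b c; decide
  have htel : ∀ m : ℕ, g (m : ZMod n) =
      g 0 + (m : ZMod 2) + ∑ k ∈ Finset.range m, twist n (k : ZMod n) := by
    intro m
    induction m with
    | zero => simp
    | succ m ih =>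
      push_cast
      rw [hstep, ih, Finset.sum_range_succ]
      push_cast
      ring
  have hsum : ∑ k ∈ Finset.range n, twist n (k : ZMod n) = (n : ZMod 2) + 1 := by
    rw [Finset.sum_eq_single 0]
    · simp [twist]
    · intro k hk hk0
      have hkn : k < n := Finset.mem_range.mp hk
      rw [twist]
      rw [if_neg]
      intro hc
      exact hk0 (natCast_inj_of_lt k 0 hkn (by omega) (by push_cast; exact hc))
    · intro h
      exact absurd (Finset.mem_range.mpr (by omega)) h
  have := htel n
  rw [ZMod.natCast_self, hsum] at this
  -- this : g 0 = g 0 + n + (n + 1)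
  have hcontra : ∀ a b : ZMod 2, a = a + b + (b + 1) → False := by decide
  exact hcontra (g 0) (n : ZMod 2) this

/-! ### Part 2: every 3-fold cover is colorable -/

lemma part2 (n : ℕ) (hn : 3 ≤ n) : DPColorable (cycleOnZMod n) 3 := by
  intro W H C hfold
  haveI : NeZero n := ⟨by omega⟩
  classical
  -- distinct lists are disjoint
  have hdisj : ∀ (x : W) (u v : ZMod n), x ∈ C.L u → x ∈ C.L v → u = v := by
    intro x u v hu hv
    obtain ⟨w, -, huniq⟩ := C.part x
    rw [huniq u hu, huniq v hv]
  -- at most one neighbor in a foreign list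
  have key : ∀ (x : W) (v : ZMod n), x ∉ C.L v →
      ((C.L v).filter (fun y => H.Adj x y)).card ≤ 1 := by
    intro x v hxv
    rw [Finset.card_le_one]
    intro a ha b hb
    rw [Finset.mem_filter] at ha hb
    obtain ⟨u, hu, -⟩ := C.part x
    have huv : u ≠ v := fun hc => hxv (hc ▸ hu)
    rcases C.cross u v x hu a ha.1 ha.2 with hc | hc
    · exact absurd hc huv
    · exact C.matching u v hc x hu a ha.1 b hb.1 ha.2 hb.2
  -- selection lemma
  have sel : ∀ (v : ZMod n) (x x' : W), x ∉ C.L v → x' ∉ C.L v →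
      ∃ y ∈ C.L v, ¬H.Adj x y ∧ ¬H.Adj x' y := by
    intro v x x' hx hx'
    have hcard := hfold v
    have hsub : (C.L v).filter (fun y => ¬(¬H.Adj x y ∧ ¬H.Adj x' y)) ⊆
        (C.L v).filter (fun y => H.Adj x y) ∪ (C.L v).filter (fun y => H.Adj x' y) := by
      intro y hy
      rw [Finset.mem_filter] at hy
      rw [Finset.mem_union, Finset.mem_filter, Finset.mem_filter]
      push_neg at hy
      by_cases hxy : H.Adj x y
      · exact Or.inl ⟨hy.1, hxy⟩
      · exact Or.inr ⟨hy.1, hy.2 hxy⟩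
    have h2 : ((C.L v).filter (fun y => ¬(¬H.Adj x y ∧ ¬H.Adj x' y))).card ≤ 2 := by
      calc ((C.L v).filter (fun y => ¬(¬H.Adj x y ∧ ¬H.Adj x' y))).card
          ≤ ((C.L v).filter (fun y => H.Adj x y) ∪ (C.L v).filter (fun y => H.Adj x' y)).card :=
            Finset.card_le_card hsub
        _ ≤ _ + _ := Finset.card_union_le _ _
        _ ≤ 2 := by have := key x v hx; have := key x' v hx'; omega
    have h3 := Finset.card_filter_add_card_filter_not
      (s := C.L v) (p := fun y => ¬H.Adj x y ∧ ¬H.Adj x' y)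
    have h4 : 0 < ((C.L v).filter (fun y => ¬H.Adj x y ∧ ¬H.Adj x' y)).card := by omega
    obtain ⟨y, hy⟩ := Finset.card_pos.mp h4
    rw [Finset.mem_filter] at hy
    exact ⟨y, hy.1, hy.2⟩
  -- base point
  obtain ⟨x0, hx0⟩ : ∃ x, x ∈ C.L 0 := by
    have := hfold 0
    exact Finset.card_pos.mp (by omega)
  -- the pick function
  let pick : ZMod n → W → W := fun v x =>
    if h : ∃ y ∈ C.L v, ¬H.Adj x y ∧ ¬H.Adj x0 y then h.choose else x0
  have hpick : ∀ (v : ZMod n) (x : W), x ∉ C.L v → x0 ∉ C.L v →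
      pick v x ∈ C.L v ∧ ¬H.Adj x (pick v x) ∧ ¬H.Adj x0 (pick v x) := by
    intro v x hx hx0'
    have h := sel v x x0 hx hx0'
    have h' : ∃ y ∈ C.L v, ¬H.Adj x y ∧ ¬H.Adj x0 y := h
    simp only [pick, dif_pos h']
    obtain ⟨h1, h2⟩ := h'.choose_spec
    exact ⟨h1, h2⟩
  -- the chain
  let f : ℕ → W := fun m => Nat.rec x0 (fun m fm => pick ((m + 1 : ℕ) : ZMod n) fm) m
  have hf0 : f 0 = x0 := rfl
  have hfs : ∀ m : ℕ, f (m + 1) = pick ((m + 1 : ℕ) : ZMod n) (f m) := fun m => rfl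
  -- cast nonzero
  have hcast_ne : ∀ m : ℕ, 0 < m → m < n → ((m : ZMod n) : ZMod n) ≠ 0 := by
    intro m hm1 hm2 hc
    exact absurd (natCast_inj_of_lt m 0 hm2 (by omega) (by push_cast; exact hc)) (by omega)
  have hfmem : ∀ m : ℕ, m < n → f m ∈ C.L (m : ZMod n) := by
    intro m
    induction m with
    | zero => intro _; simpa [hf0] using hx0
    | succ m ih =>
      intro hm
      have hfm := ih (by omega)
      have h1 : f m ∉ C.L ((m + 1 : ℕ) : ZMod n) := by
        intro hc
        have := hdisj (f m) _ _ hfm hc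
        exact absurd (natCast_inj_of_lt m (m+1) (by omega) hm this) (by omega)
      have h2 : x0 ∉ C.L ((m + 1 : ℕ) : ZMod n) := by
        intro hc
        have := hdisj x0 _ _ hx0 hc
        exact hcast_ne (m+1) (by omega) hm this.symm
      rw [hfs]
      exact (hpick _ _ h1 h2).1
  have hfadj : ∀ m : ℕ, m + 1 < n →
      ¬H.Adj (f m) (f (m + 1)) ∧ ¬H.Adj x0 (f (m + 1)) := by
    intro m hm
    have hfm := hfmem m (by omega)
    have h1 : f m ∉ C.L ((m + 1 : ℕ) : ZMod n) := by
      intro hc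
      have := hdisj (f m) _ _ hfm hc
      exact absurd (natCast_inj_of_lt m (m+1) (by omega) hm this) (by omega)
    have h2 : x0 ∉ C.L ((m + 1 : ℕ) : ZMod n) := by
      intro hc
      have := hdisj x0 _ _ hx0 hc
      exact hcast_ne (m+1) (by omega) hm this.symm
    rw [hfs]
    exact (hpick _ _ h1 h2).2
  -- claim: no adjacency between consecutive picks
  have claim : ∀ i j : ℕ, i < n → j < n → ((j : ZMod n) = (i : ZMod n) + 1) →
      ¬ H.Adj (f i) (f j) := by
    intro i j hi hj hij
    by_cases hin : i + 1 < n
    · have : ((j : ZMod n)) = ((i + 1 : ℕ) : ZMod n) := by push_cast; exact hij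
      have hji : j = i + 1 := natCast_inj_of_lt j (i+1) hj hin this
      rw [hji]
      exact (hfadj i hin).1
    · -- i = n - 1, so j ≡ 0
      have hin' : i + 1 = n := by omega
      have hj0 : (j : ZMod n) = 0 := by
        have hcast : ((i + 1 : ℕ) : ZMod n) = 0 := by rw [hin']; exact ZMod.natCast_self n
        push_cast at hcast
        rw [hij]; exact hcast
      have hj00 : j = 0 := by
        exact natCast_inj_of_lt j 0 hj (by omega) (by push_cast; exact hj0)
      rw [hj00, hf0]
      have hi1 : i = (i - 1) + 1 := by omega
      have := (hfadj (i - 1) (by omega)).2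
      rw [← hi1] at this
      intro hc
      exact this hc.symm
  -- the independent set
  refine ⟨{w | ∃ m, m < n ∧ f m = w}, ?_, ?_⟩
  · rintro x ⟨i, hi, rfl⟩ y ⟨j, hj, rfl⟩ hadj
    have hxi := hfmem i hi
    have hyj := hfmem j hj
    rcases C.cross _ _ _ hxi _ hyj hadj with hc | hc
    · have : i = j := natCast_inj_of_lt i j hi hj hc
      rw [this] at hadj
      exact H.irrefl hadj
    · rw [cycleOnZMod, SimpleGraph.fromRel_adj] at hc
      rcases hc.2 with hc2 | hc2
      · exact claim i j hi hj hc2 hadj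
      · exact claim j i hj hi hc2 hadj.symm
  · intro u
    refine ⟨f u.val, ⟨⟨u.val, ZMod.val_lt u, rfl⟩, ?_⟩, ?_⟩
    · have := hfmem u.val (ZMod.val_lt u)
      rwa [ZMod.natCast_rightInverse u] at this
    · rintro x ⟨⟨m, hm, rfl⟩, hxu⟩
      have hfm := hfmem m hm
      have : (m : ZMod n) = u := hdisj (f m) _ _ hfm hxu
      have hmu : m = u.val := by
        have : ((m : ℕ) : ZMod n) = ((u.val : ℕ) : ZMod n) := by
          rw [this, ZMod.natCast_rightInverse u]
        exact natCast_inj_of_lt m u.val hm (ZMod.val_lt u) this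
      rw [hmu]


/-- For every `n ≥ 3`, the cycle `C_n` admits a 2-fold cover with no coloring (so
`χ_DP(C_n) ≥ 3`, regardless of the parity of `n`); moreover every 3-fold cover of `C_n`
admits a coloring, so `χ_DP(C_n) = 3`. -/
theorem cycle_DP_chromatic_number_three (n : ℕ) (hn : 3 ≤ n) :
    (∃ (W : Type) (H : SimpleGraph W) (C : DPCover (cycleOnZMod n) H),
      C.IsFold 2 ∧ ¬ C.HasColoring) ∧
    DPColorable (cycleOnZMod n) 3 := by
  exact ⟨⟨ZMod n × ZMod 2, Hgraph n, badCover n hn, badCover_isFold n hn,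
    badCover_noColoring n hn⟩, part2 n hn⟩
end
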